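/- The backward shift A: X → X, (x_k)_{k∈ℕ} ↦ (x_{k+1})_{k∈ℕ}, is a well-defined bounded linear operator on X, and for every n ∈ ℕ its n-th power has operator norm exactly ‖Aⁿ‖ = n + 1. In particular ‖A‖ = 2. -/

import Mathlib

open Filter Topology
set_option maxHeartbeats 1000000

/-- Membership in `X` (0-based: `x k` is the paper's `x_{k+1}`). -/
def MemX (x : ℕ → ℝ) : Prop :=
  Summable (fun k : ℕ => |x (k + 1) / ((k : ℝ) + 2) - x k / ((k : ℝ) + 1)|) ∧
  Tendsto (fun k : ℕ => x k / ((k : ℝ) + 1)) atTop (𝓝 0)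

/-- The norm of `X`. -/
noncomputable def normX (x : ℕ → ℝ) : ℝ :=
  ∑' k : ℕ, |x (k + 1) / ((k : ℝ) + 2) - x k / ((k : ℝ) + 1)|

lemma coefSum (n : ℕ) : ∀ m : ℕ, ∑ k ∈ Finset.range (m+1), (n:ℝ)/(((k:ℝ)+1)*((k:ℝ)+2))
    = (n:ℝ)*((m:ℝ)+1)/((m:ℝ)+2) := by
  intro m
  induction m with
  | zero => norm_num
  | succ m ih =>
    rw [Finset.sum_range_succ, ih]
    push_cast
    have h1 : (m:ℝ)+2 ≠ 0 := by positivity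
    have h2 : (m:ℝ)+3 ≠ 0 := by positivity
    field_simp
    ring

lemma summable_inv_mul : Summable (fun k : ℕ => 1/(((k:ℝ)+1)*((k:ℝ)+2))) := by
  have h : Summable (fun k : ℕ => 1/((k:ℝ)+1)^2) := by
    have := (summable_nat_add_iff 1).2 (Real.summable_one_div_nat_pow.2 (by norm_num : 1 < 2))
    refine this.congr fun k => ?_
    push_cast
    ring
  refine h.of_nonneg_of_le (fun k => by positivity) fun k => ?_
  have h1 : (0:ℝ) < (k:ℝ)+1 := by positivity
  rw [div_le_div_iff₀ (by positivity) (by positivity)]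
  nlinarith

lemma tsum_shift_le (f : ℕ → ℝ) (hf : Summable f) (h0 : ∀ i, 0 ≤ f i) (k : ℕ) :
    ∑' j, f (j + k) ≤ ∑' j, f j := by
  have hsh : Summable fun n => f (n + k) := (summable_nat_add_iff k).2 hf
  have := Summable.sum_add_tsum_nat_add' hsh
  have hpos : 0 ≤ ∑ i ∈ Finset.range k, f i := Finset.sum_nonneg fun i _ => h0 i
  linarith

lemma abs_y_le (y d : ℕ → ℝ) (hdy : ∀ k, d k = y (k+1) - y k)
    (hd : Summable fun k => |d k|) (hy : Tendsto y atTop (𝓝 0)) (k : ℕ) :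
    |y k| ≤ ∑' j, |d (j + k)| := by
  have hds : Summable d := hd.of_abs
  have hds' : Summable fun j => d (j + k) := (summable_nat_add_iff k).2 hds
  have h1 : Tendsto (fun m => ∑ j ∈ Finset.range m, d (j + k)) atTop
      (𝓝 (∑' j, d (j + k))) := hds'.hasSum.tendsto_sum_nat
  have h2 : (fun m => ∑ j ∈ Finset.range m, d (j + k)) = fun m => y (m + k) - y k := by
    funext m
    have h := Finset.sum_range_sub (fun j => y (j + k)) m
    simp only [Nat.zero_add] at h
    rw [← h]
    refine Finset.sum_congr rfl fun j _ => ?_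
    rw [hdy]
    congr 2
    omega
  have h3 : Tendsto (fun m => y (m + k) - y k) atTop (𝓝 (0 - y k)) :=
    (hy.comp (tendsto_add_atTop_nat k)).sub_const _
  have heq : ∑' j, d (j + k) = -(y k) := by
    have := tendsto_nhds_unique (h2 ▸ h1) h3
    rw [this]; ring
  calc |y k| = |∑' j, d (j + k)| := by rw [heq, abs_neg]
    _ ≤ ∑' j, |d (j + k)| := by
        have := norm_tsum_le_tsum_norm (f := fun j => d (j + k)) ?_
        · simpa [Real.norm_eq_abs] using this
        · simpa [Real.norm_eq_abs] using (summable_nat_add_iff k).2 hd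

lemma tsum_shift_ennreal (c : ℕ → ENNReal) (k : ℕ) :
    ∑' j, c (j + k) = ∑' m, if k ≤ m then c m else 0 := by
  have hinj : Function.Injective (fun j : ℕ => j + k) := fun a b h => by simpa using h
  have h2 := hinj.tsum_eq (f := fun m => if k ≤ m then c m else 0) ?_
  · rw [← h2]
    simp
  · intro m hm
    simp only [Function.mem_support, ne_eq, ite_eq_right_iff, not_forall] at hm
    obtain ⟨hk, -⟩ := hm
    exact ⟨m - k, by show m - k + k = m; omega⟩

theorem stmt_10 (n : ℕ) :
    (∀ x : ℕ → ℝ, MemX x →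
      MemX (fun k => x (k + n)) ∧
      normX (fun k => x (k + n)) ≤ ((n : ℝ) + 1) * normX x) ∧
    (∃ x : ℕ → ℝ, MemX x ∧ normX x = 1 ∧
      normX (fun k => x (k + n)) = (n : ℝ) + 1) := by
  constructor
  · intro x hx
    set d : ℕ → ℝ := fun k => x (k+1)/((k:ℝ)+2) - x k/((k:ℝ)+1) with hd_def
    set y : ℕ → ℝ := fun k => x k/((k:ℝ)+1) with hy_def
    have hd : Summable fun k => |d k| := hx.1
    have hy : Tendsto y atTop (𝓝 0) := hx.2
    have hdy : ∀ k, d k = y (k+1) - y k := by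
      intro k
      simp only [hd_def, hy_def]
      push_cast
      ring
    have hyb : ∀ k, |y k| ≤ ∑' j, |d (j+k)| := abs_y_le y d hdy hd hy
    set S : ℝ := ∑' k, |d k| with hS_def
    have hS0 : 0 ≤ S := tsum_nonneg fun k => abs_nonneg _
    have hT : ∀ k, (∑' j, |d (j+k)|) ≤ S := fun k =>
      tsum_shift_le _ hd (fun i => abs_nonneg _) k
    set e : ℕ → ℝ := fun k => x (k+1+n)/((k:ℝ)+2) - x (k+n)/((k:ℝ)+1) with he_def
    have hid : ∀ k, e k = (1+(n:ℝ)/((k:ℝ)+2)) * d (k+n)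
        - ((n:ℝ)/(((k:ℝ)+1)*((k:ℝ)+2))) * y (k+n) := by
      intro k
      have hidx : k+1+n = k+n+1 := by omega
      simp only [he_def, hd_def, hy_def, hidx]
      push_cast
      have h1 : (k:ℝ)+1 ≠ 0 := by positivity
      have h2 : (k:ℝ)+2 ≠ 0 := by positivity
      have h3 : (k:ℝ)+(n:ℝ)+1 ≠ 0 := by positivity
      have h4 : (k:ℝ)+(n:ℝ)+2 ≠ 0 := by positivity
      field_simp
      ring
    have habs : ∀ k, |e k| ≤ (1+(n:ℝ)/((k:ℝ)+2)) * |d (k+n)|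
        + ((n:ℝ)/(((k:ℝ)+1)*((k:ℝ)+2))) * |y (k+n)| := by
      intro k
      rw [hid k]
      refine (abs_sub _ _).trans ?_
      rw [abs_mul, abs_mul, abs_of_nonneg (by positivity : (0:ℝ) ≤ 1+(n:ℝ)/((k:ℝ)+2)),
        abs_of_nonneg (by positivity : (0:ℝ) ≤ (n:ℝ)/(((k:ℝ)+1)*((k:ℝ)+2)))]
    have hdsh : Summable fun k => |d (k+n)| := (summable_nat_add_iff n).2 hd
    have hbound : ∀ k, |e k| ≤ ((n:ℝ)+1) * |d (k+n)|
        + ((n:ℝ)*S) * (1/(((k:ℝ)+1)*((k:ℝ)+2))) := by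
      intro k
      refine (habs k).trans (add_le_add ?_ ?_)
      · refine mul_le_mul_of_nonneg_right ?_ (abs_nonneg _)
        have : (n:ℝ)/((k:ℝ)+2) ≤ n := div_le_self (by positivity) (by linarith [Nat.cast_nonneg (α := ℝ) k])
        linarith
      · have h1 : |y (k+n)| ≤ S := (hyb (k+n)).trans (hT (k+n))
        have h2 : ((n:ℝ)*S) * (1/(((k:ℝ)+1)*((k:ℝ)+2)))
            = ((n:ℝ)/(((k:ℝ)+1)*((k:ℝ)+2))) * S := by ring
        rw [h2]
        exact mul_le_mul_of_nonneg_left h1 (by positivity)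
    have hgsum : Summable fun k => ((n:ℝ)+1) * |d (k+n)|
        + ((n:ℝ)*S) * (1/(((k:ℝ)+1)*((k:ℝ)+2))) :=
      (hdsh.mul_left _).add (summable_inv_mul.mul_left _)
    have hesum : Summable fun k => |e k| :=
      Summable.of_nonneg_of_le (fun k => abs_nonneg _) hbound hgsum
    refine ⟨⟨hesum, ?_⟩, ?_⟩
    · -- tendsto
      have hle : ∀ k : ℕ, ‖x (k+n) / ((k:ℝ)+1)‖ ≤ ((n:ℝ)+1) * |y (k+n)| := by
        intro k
        have ha : (0:ℝ) ≤ |x (k+n)| := abs_nonneg _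
        have hy' : |y (k+n)| = |x (k+n)| / ((k:ℝ)+(n:ℝ)+1) := by
          simp only [hy_def]
          rw [abs_div]
          congr 1
          · push_cast; rw [abs_of_pos]; positivity
        rw [Real.norm_eq_abs, abs_div, abs_of_pos (by positivity : (0:ℝ) < (k:ℝ)+1), hy',
          mul_div_assoc', div_le_div_iff₀ (by positivity) (by positivity)]
        have hk0 : (0:ℝ) ≤ (k:ℝ) := Nat.cast_nonneg k
        have hn0 : (0:ℝ) ≤ (n:ℝ) := Nat.cast_nonneg n
        nlinarith [mul_nonneg (mul_nonneg ha hk0) hn0, mul_nonneg ha hn0]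
      have h0 : Tendsto (fun k => ((n:ℝ)+1) * |y (k+n)|) atTop (𝓝 (((n:ℝ)+1)*|0|)) :=
        ((hy.comp (tendsto_add_atTop_nat n)).abs).const_mul _
      simp only [abs_zero, mul_zero] at h0
      exact squeeze_zero_norm hle h0
    · -- norm bound
      set c : ℕ → ENNReal := fun m => ENNReal.ofReal |d (m+n)| with hc_def
      have hc : ∀ k : ℕ, ENNReal.ofReal (∑' j, |d (j+(k+n))|) = ∑' j, c (j+k) := by
        intro k
        rw [ENNReal.ofReal_tsum_of_nonneg (fun j => abs_nonneg _)
          ((summable_nat_add_iff (k+n)).2 hd)]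
        exact tsum_congr fun j => by simp only [hc_def, ← Nat.add_assoc]
      have step1 : ∀ k : ℕ, ENNReal.ofReal |e k|
          ≤ ENNReal.ofReal (1+(n:ℝ)/((k:ℝ)+2)) * c k
            + ENNReal.ofReal ((n:ℝ)/(((k:ℝ)+1)*((k:ℝ)+2))) * ∑' j, c (j+k) := by
        intro k
        have h1 : |e k| ≤ (1+(n:ℝ)/((k:ℝ)+2)) * |d (k+n)|
            + ((n:ℝ)/(((k:ℝ)+1)*((k:ℝ)+2))) * (∑' j, |d (j+(k+n))|) :=
          (habs k).trans (add_le_add_right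
            (mul_le_mul_of_nonneg_left (hyb (k+n)) (by positivity)) _)
        refine (ENNReal.ofReal_le_ofReal h1).trans_eq ?_
        rw [ENNReal.ofReal_add (mul_nonneg (by positivity) (abs_nonneg _))
            (mul_nonneg (by positivity) (tsum_nonneg fun _ => abs_nonneg _)),
          ENNReal.ofReal_mul (by positivity), ENNReal.ofReal_mul (by positivity), hc k]
      have hexchange : ∑' k : ℕ, ENNReal.ofReal ((n:ℝ)/(((k:ℝ)+1)*((k:ℝ)+2))) * (∑' j, c (j+k))
          = ∑' m : ℕ, ENNReal.ofReal ((n:ℝ)*((m:ℝ)+1)/((m:ℝ)+2)) * c m := by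
        calc ∑' k : ℕ, ENNReal.ofReal ((n:ℝ)/(((k:ℝ)+1)*((k:ℝ)+2))) * (∑' j, c (j+k))
            = ∑' k : ℕ, ∑' m : ℕ,
              (if k ≤ m then ENNReal.ofReal ((n:ℝ)/(((k:ℝ)+1)*((k:ℝ)+2))) else 0) * c m := by
              refine tsum_congr fun k => ?_
              rw [tsum_shift_ennreal c k, ← ENNReal.tsum_mul_left]
              exact tsum_congr fun m => by split <;> simp
          _ = ∑' m : ℕ, ∑' k : ℕ,
              (if k ≤ m then ENNReal.ofReal ((n:ℝ)/(((k:ℝ)+1)*((k:ℝ)+2))) else 0) * c m :=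
              ENNReal.tsum_comm
          _ = ∑' m : ℕ, (∑' k : ℕ,
              if k ≤ m then ENNReal.ofReal ((n:ℝ)/(((k:ℝ)+1)*((k:ℝ)+2))) else 0) * c m :=
              tsum_congr fun m => ENNReal.tsum_mul_right
          _ = ∑' m : ℕ, ENNReal.ofReal ((n:ℝ)*((m:ℝ)+1)/((m:ℝ)+2)) * c m := by
              refine tsum_congr fun m => ?_
              congr 1
              rw [tsum_eq_sum (s := Finset.range (m+1)) (fun b hb => by
                have hbm : ¬ b ≤ m := fun h => hb (Finset.mem_range.2 (Nat.lt_succ_of_le h))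
                simp [hbm])]
              rw [Finset.sum_congr rfl (fun k hk => if_pos (by
                have := Finset.mem_range.1 hk; omega))]
              rw [← ENNReal.ofReal_sum_of_nonneg (fun k _ => by positivity), coefSum n m]
      have hchain : ∑' k, ENNReal.ofReal |e k|
          ≤ ENNReal.ofReal ((n:ℝ)+1) * ∑' m, c m := by
        calc ∑' k, ENNReal.ofReal |e k|
            ≤ ∑' k : ℕ, (ENNReal.ofReal (1+(n:ℝ)/((k:ℝ)+2)) * c k
              + ENNReal.ofReal ((n:ℝ)/(((k:ℝ)+1)*((k:ℝ)+2))) * ∑' j, c (j+k)) :=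
              ENNReal.tsum_le_tsum step1
          _ = (∑' k : ℕ, ENNReal.ofReal (1+(n:ℝ)/((k:ℝ)+2)) * c k)
              + ∑' k : ℕ, ENNReal.ofReal ((n:ℝ)/(((k:ℝ)+1)*((k:ℝ)+2))) * ∑' j, c (j+k) :=
              ENNReal.tsum_add
          _ = (∑' k : ℕ, ENNReal.ofReal (1+(n:ℝ)/((k:ℝ)+2)) * c k)
              + ∑' m : ℕ, ENNReal.ofReal ((n:ℝ)*((m:ℝ)+1)/((m:ℝ)+2)) * c m := by
              rw [hexchange]
          _ = ∑' m : ℕ, (ENNReal.ofReal (1+(n:ℝ)/((m:ℝ)+2))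
              + ENNReal.ofReal ((n:ℝ)*((m:ℝ)+1)/((m:ℝ)+2))) * c m := by
              rw [← ENNReal.tsum_add]
              exact tsum_congr fun m => by ring
          _ = ∑' m : ℕ, ENNReal.ofReal ((n:ℝ)+1) * c m := by
              refine tsum_congr fun m => ?_
              congr 1
              rw [← ENNReal.ofReal_add (by positivity) (by positivity)]
              congr 1
              have hm : (m:ℝ)+2 ≠ 0 := by positivity
              field_simp
              ring
          _ = ENNReal.ofReal ((n:ℝ)+1) * ∑' m, c m := ENNReal.tsum_mul_left
      have hL : ENNReal.ofReal (∑' k, |e k|) = ∑' k, ENNReal.ofReal |e k| :=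
        ENNReal.ofReal_tsum_of_nonneg (fun _ => abs_nonneg _) hesum
      have hR : ∑' m, c m = ENNReal.ofReal (∑' m, |d (m+n)|) :=
        (ENNReal.ofReal_tsum_of_nonneg (fun _ => abs_nonneg _) hdsh).symm
      have hfin : ENNReal.ofReal (∑' k, |e k|)
          ≤ ENNReal.ofReal (((n:ℝ)+1) * ∑' m, |d (m+n)|) := by
        rw [hL]
        refine hchain.trans_eq ?_
        rw [hR, ← ENNReal.ofReal_mul (by positivity)]
      have hreal : ∑' k, |e k| ≤ ((n:ℝ)+1) * ∑' m, |d (m+n)| :=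
        (ENNReal.ofReal_le_ofReal_iff
          (mul_nonneg (by positivity) (tsum_nonneg fun _ => abs_nonneg _))).1 hfin
      have hfinal : ∑' k, |e k| ≤ ((n:ℝ)+1) * S := by
        refine hreal.trans (mul_le_mul_of_nonneg_left ?_ (by positivity))
        exact tsum_shift_le _ hd (fun i => abs_nonneg _) n
      exact hfinal
  · -- attainment
    set w : ℕ → ℝ := fun k => if k ≤ n then ((k:ℝ)+1) else 0 with hw_def
    have hdw : ∀ k : ℕ, |w (k+1) / ((k:ℝ)+2) - w k / ((k:ℝ)+1)|
        = if k = n then 1 else 0 := by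
      intro k
      rcases lt_trichotomy k n with h | h | h
      · have h1 : k + 1 ≤ n := by omega
        have h2 : k ≤ n := by omega
        have h3 : k ≠ n := by omega
        simp only [hw_def, if_pos h1, if_pos h2, if_neg h3]
        push_cast
        rw [show ((k:ℝ)+1+1) = (k:ℝ)+2 by ring, div_self (by positivity : ((k:ℝ)+2) ≠ 0),
          div_self (by positivity : ((k:ℝ)+1) ≠ 0)]
        simp
      · subst h
        have h1 : ¬ (k + 1 ≤ k) := by omega
        simp only [hw_def, if_pos (le_refl k), if_neg h1, if_pos rfl]
        rw [zero_div, zero_sub, abs_neg, div_self (by positivity)]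
        simp
      · have h1 : ¬ (k + 1 ≤ n) := by omega
        have h2 : ¬ (k ≤ n) := by omega
        have h3 : k ≠ n := by omega
        simp [hw_def, h1, h2, h3]
    have hsum : Summable (fun k : ℕ => |w (k+1) / ((k:ℝ)+2) - w k / ((k:ℝ)+1)|) := by
      refine summable_of_ne_finset_zero (s := {n}) fun b hb => ?_
      rw [hdw b, if_neg (by simpa using hb)]
    refine ⟨w, ⟨hsum, ?_⟩, ?_, ?_⟩
    · -- tendsto
      have hev : (fun k : ℕ => w k / ((k:ℝ)+1)) =ᶠ[atTop] (fun _ => (0:ℝ)) := by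
        filter_upwards [eventually_ge_atTop (n+1)] with k hk
        have hkn : ¬ k ≤ n := by omega
        simp [hw_def, hkn]
      exact (tendsto_congr' hev).2 tendsto_const_nhds
    · -- norm 1
      show (∑' k : ℕ, |w (k+1) / ((k:ℝ)+2) - w k / ((k:ℝ)+1)|) = 1
      rw [tsum_eq_single n (fun b hb => by rw [hdw b, if_neg hb]), hdw n, if_pos rfl]
    · -- shifted norm
      show (∑' k : ℕ, |w (k+1+n) / ((k:ℝ)+2) - w (k+n) / ((k:ℝ)+1)|) = (n:ℝ)+1
      have hu : ∀ k : ℕ, |w (k+1+n) / ((k:ℝ)+2) - w (k+n) / ((k:ℝ)+1)|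
          = if k = 0 then (n:ℝ)+1 else 0 := by
        intro k
        have h1 : ¬ (k + 1 + n ≤ n) := by omega
        rcases Nat.eq_zero_or_pos k with hk | hk
        · subst hk
          simp only [hw_def, if_neg h1, if_pos (by omega : 0 + n ≤ n), if_pos rfl]
          push_cast
          rw [zero_div, zero_sub, abs_neg]
          rw [abs_of_nonneg (by positivity)]
          push_cast
          ring
        · have h2 : ¬ (k + n ≤ n) := by omega
          have h3 : k ≠ 0 := by omega
          simp [hw_def, h1, h2, h3]
      calc (∑' k : ℕ, |w (k+1+n) / ((k:ℝ)+2) - w (k+n) / ((k:ℝ)+1)|)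
          = ∑' k : ℕ, if k = 0 then (n:ℝ)+1 else 0 := tsum_congr hu
        _ = (n:ℝ)+1 := by
            rw [tsum_eq_single 0 (fun b hb => if_neg hb)]
            simp
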